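/- The entropy of the binomial distribution Binomial(j, 1/2), namely H(j) = -∑_{k=0}^j 2^{-j} C(j,k) ln(2^{-j} C(j,k)), satisfies H(j) = (1/2) ln(π e j / 2) + o(1) as j → ∞. -/

import Mathlib

open Filter Finset Real


/-- Stirling error: `log n! - (n log n - n + log(2πn)/2)`. -/
noncomputable def binEntAux_st (n : ℕ) : ℝ :=
  Real.log n.factorial - ((n : ℝ) * Real.log n - n + Real.log (2 * Real.pi * n) / 2)

lemma binEntAux_st_tendsto : Tendsto binEntAux_st atTop (nhds 0) := by
  have h1 : Tendsto (fun n => Real.log (Stirling.stirlingSeq n) - Real.log (Real.sqrt Real.pi))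
      atTop (nhds 0) := by
    have := (Real.continuousAt_log (x := Real.sqrt Real.pi) (by positivity)).tendsto.comp
      Stirling.tendsto_stirlingSeq_sqrt_pi
    have h2 := this.sub (tendsto_const_nhds (x := Real.log (Real.sqrt Real.pi)) (f := atTop))
    simpa using h2
  apply h1.congr'
  filter_upwards [eventually_ge_atTop 1] with n hn
  have hn0 : (0:ℝ) < n := by exact_mod_cast hn
  rw [Stirling.log_stirlingSeq_formula, binEntAux_st, Real.log_sqrt Real.pi_pos.le,
    Real.log_div (ne_of_gt hn0) (by positivity), Real.log_exp,
    Real.log_mul (by norm_num) (ne_of_gt hn0),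
    Real.log_mul (by positivity) (ne_of_gt hn0), Real.log_mul (by norm_num) Real.pi_ne_zero]
  ring


lemma binEntAux_pascal (f : ℕ → ℝ) (j : ℕ) :
    ∑ k ∈ range (j + 2), ((j+1).choose k : ℝ) * f k
      = ∑ k ∈ range (j + 1), (j.choose k : ℝ) * (f k + f (k+1)) := by
  rw [Finset.sum_range_succ' (fun k => ((j+1).choose k : ℝ) * f k)]
  have h1 : ∀ k, ((j+1).choose (k+1) : ℝ) = (j.choose k : ℝ) + (j.choose (k+1) : ℝ) := by
    intro k; exact_mod_cast congrArg (Nat.cast : ℕ → ℝ) (Nat.choose_succ_succ' j k)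
  have h2 : ∑ k ∈ range (j+1), ((j.choose (k+1) : ℝ)) * f (k+1)
      = ∑ k ∈ range (j+1), ((j.choose k : ℝ)) * f k - (j.choose 0 : ℝ) * f 0 := by
    have := Finset.sum_range_succ' (fun k => ((j.choose k : ℝ)) * f k) (j+1)
    have hz : (j.choose (j+1) : ℝ) = 0 := by
      simp [Nat.choose_eq_zero_of_lt (Nat.lt_succ_self j)]
    rw [Finset.sum_range_succ (fun k => ((j.choose k : ℝ)) * f k) (j+1)] at this
    rw [hz] at this
    linarith [this]
  simp only [h1, add_mul]
  rw [Finset.sum_add_distrib, h2]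
  simp only [Nat.choose_zero_right, Nat.cast_one, mul_add]
  rw [Finset.sum_add_distrib]
  ring

lemma binEntAux_m0 (j : ℕ) : ∑ k ∈ range (j + 1), (j.choose k : ℝ) = 2 ^ j := by
  exact_mod_cast Nat.sum_range_choose j

lemma binEntAux_m2 (j : ℕ) :
    ∑ k ∈ range (j + 1), (j.choose k : ℝ) * (2 * (k:ℝ) - (j:ℝ)) ^ 2 = (j:ℝ) * 2 ^ j := by
  induction j with
  | zero => simp
  | succ j ih =>
    have hp := binEntAux_pascal (fun k => (2 * (k:ℝ) - ((j:ℝ)+1)) ^ 2) j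
    push_cast
    rw [show j + 1 + 1 = j + 2 from rfl, hp]
    push_cast
    calc ∑ x ∈ range (j+1), (j.choose x : ℝ) * ((2*(x:ℝ) - ((j:ℝ)+1))^2 + (2*((x:ℝ)+1) - ((j:ℝ)+1))^2)
        = ∑ x ∈ range (j+1), (2*((j.choose x : ℝ)*(2*(x:ℝ)-(j:ℝ))^2) + 2*(j.choose x : ℝ)) := by
          apply Finset.sum_congr rfl; intro x _; ring
      _ = 2*((j:ℝ)*2^j) + 2*(2^j) := by
          rw [Finset.sum_add_distrib, ← Finset.mul_sum, ← Finset.mul_sum, ih, binEntAux_m0]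
      _ = ((j:ℝ)+1) * 2^(j+1) := by ring

lemma binEntAux_m4 (j : ℕ) :
    ∑ k ∈ range (j + 1), (j.choose k : ℝ) * (2 * (k:ℝ) - (j:ℝ)) ^ 4
      = (3*(j:ℝ)^2 - 2*(j:ℝ)) * 2 ^ j := by
  induction j with
  | zero => simp
  | succ j ih =>
    have hp := binEntAux_pascal (fun k => (2 * (k:ℝ) - ((j:ℝ)+1)) ^ 4) j
    push_cast
    rw [show j + 1 + 1 = j + 2 from rfl, hp]
    push_cast
    calc ∑ x ∈ range (j+1), (j.choose x : ℝ) * ((2*(x:ℝ) - ((j:ℝ)+1))^4 + (2*((x:ℝ)+1) - ((j:ℝ)+1))^4)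
        = ∑ x ∈ range (j+1), (2*((j.choose x : ℝ)*(2*(x:ℝ)-(j:ℝ))^4)
            + 12*((j.choose x : ℝ)*(2*(x:ℝ)-(j:ℝ))^2) + 2*(j.choose x : ℝ)) := by
          apply Finset.sum_congr rfl; intro x _; ring
      _ = 2*((3*(j:ℝ)^2-2*(j:ℝ))*2^j) + 12*((j:ℝ)*2^j) + 2*(2^j) := by
          rw [Finset.sum_add_distrib, Finset.sum_add_distrib, ← Finset.mul_sum, ← Finset.mul_sum,
            ← Finset.mul_sum, ih, binEntAux_m2, binEntAux_m0]
      _ = (3*((j:ℝ)+1)^2 - 2*((j:ℝ)+1)) * 2^(j+1) := by ring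


-- |log(1-x) + (x + x²/2 + x³/3)| ≤ 2|x|⁴ for |x| ≤ 1/2
lemma binEntAux_log3 (x : ℝ) (hx : |x| ≤ 1/2) :
    |Real.log (1 - x) + (x + x^2/2 + x^3/3)| ≤ 2 * x^4 := by
  have h := Real.abs_log_sub_add_sum_range_le (x := x) (by linarith [abs_nonneg x] : |x| < 1) 3
  simp only [Finset.sum_range_succ, Finset.sum_range_zero] at h
  norm_num at h
  have h4 : |x|^4 = x^4 := by
    rw [← abs_pow]; exact abs_of_nonneg (by positivity)
  have h5 : |x| ^ (3+1) / (1 - |x|) ≤ 2 * x^4 := by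
    rw [pow_succ, show |x|^3 * |x| = |x|^4 by ring, h4]
    rw [div_le_iff₀ (by linarith)]
    nlinarith [pow_nonneg (abs_nonneg x) 4, abs_nonneg x]
  calc |Real.log (1 - x) + (x + x^2/2 + x^3/3)|
      = |x + x^2/2 + x^3/3 + Real.log (1-x)| := by rw [add_comm]
    _ ≤ |x| ^ 4 / (1 - |x|) := h
    _ ≤ 2 * x^4 := by simpa using h5

-- |(1/2+u)log(1+2u) + (1/2-u)log(1-2u) - 2u²| ≤ 54 u⁴ for |u| ≤ 1/4
lemma binEntAux_phi (u : ℝ) (hu : |u| ≤ 1/4) :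
    |(1/2+u) * Real.log (1+2*u) + (1/2-u) * Real.log (1-2*u) - 2*u^2| ≤ 54 * u^4 := by
  have hu2 : |2*u| ≤ 1/2 := by rw [abs_mul]; rw [abs_two]; linarith [abs_nonneg u]
  have hum2 : |(-(2*u))| ≤ 1/2 := by rwa [abs_neg]
  have h1 := binEntAux_log3 (2*u) hu2
  have h2 := binEntAux_log3 (-(2*u)) hum2
  rw [show (1 - -(2*u)) = 1 + 2*u by ring] at h2
  set a := Real.log (1+2*u) + ((-(2*u)) + (-(2*u))^2/2 + (-(2*u))^3/3) with ha
  set b := Real.log (1-2*u) + ((2*u) + (2*u)^2/2 + (2*u)^3/3) with hb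
  have ea : Real.log (1+2*u) = a + (2*u - 2*u^2 + 8*u^3/3) := by rw [ha]; ring
  have eb : Real.log (1-2*u) = b + (-(2*u) - 2*u^2 - 8*u^3/3) := by rw [hb]; ring
  have hba : |a| ≤ 32 * u^4 := by
    calc |a| ≤ 2 * (-(2*u))^4 := h2
      _ = 32 * u^4 := by ring
  have hbb : |b| ≤ 32 * u^4 := by
    calc |b| ≤ 2 * (2*u)^4 := h1
      _ = 32 * u^4 := by ring
  have key : (1/2+u) * Real.log (1+2*u) + (1/2-u) * Real.log (1-2*u) - 2*u^2
      = (1/2+u)*a + (1/2-u)*b + 16*u^4/3 := by rw [ea, eb]; ring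
  rw [key]
  have c1 : |(1/2+u)*a| ≤ (3/4) * (32*u^4) := by
    rw [abs_mul]
    apply mul_le_mul _ hba (abs_nonneg a) (by norm_num)
    rw [abs_le] at hu ⊢; constructor <;> linarith [hu.1, hu.2]
  have c2 : |(1/2-u)*b| ≤ (3/4) * (32*u^4) := by
    rw [abs_mul]
    apply mul_le_mul _ hbb (abs_nonneg b) (by norm_num)
    rw [abs_le] at hu ⊢; constructor <;> linarith [hu.1, hu.2]
  calc |(1/2+u)*a + (1/2-u)*b + 16*u^4/3|
      ≤ |(1/2+u)*a| + |(1/2-u)*b| + |16*u^4/3| := by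
        exact (abs_add_le _ _).trans (by gcongr; exact abs_add_le _ _)
    _ ≤ (3/4)*(32*u^4) + (3/4)*(32*u^4) + 16*u^4/3 := by
        have : |16*u^4/3| = 16*u^4/3 := abs_of_nonneg (by positivity)
        rw [this]; gcongr
    _ ≤ 54 * u^4 := by nlinarith [pow_nonneg (abs_nonneg u) 4]

-- |log(1-4u²)| ≤ 6u² for |u| ≤ 1/4
lemma binEntAux_logB (u : ℝ) (hu : |u| ≤ 1/4) :
    |Real.log (1 - 4*u^2)| ≤ 6 * u^2 := by
  have hx : |4*u^2| < 1 := by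
    rw [abs_of_nonneg (by positivity)]
    nlinarith [abs_le.1 hu, sq_abs u, abs_nonneg u]
  have h := Real.abs_log_sub_add_sum_range_le hx 1
  simp only [Finset.sum_range_succ, Finset.sum_range_zero] at h
  norm_num at h
  have hu4 : u^2 ≤ 1/16 := by nlinarith [abs_le.1 hu, sq_abs u]
  have h2 : (4*u^2)^2 / (1 - 4*u^2) ≤ 2*u^2 := by
    rw [div_le_iff₀ (by nlinarith)]
    nlinarith [sq_nonneg u, sq_nonneg (u^2)]
  have h3 : |Real.log (1 - 4*u^2)| ≤ |4*u^2 + Real.log (1 - 4*u^2)| + |4*u^2| := by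
    calc |Real.log (1 - 4*u^2)| = |(4*u^2 + Real.log (1 - 4*u^2)) + (-(4*u^2))| := by
          congr 1; ring
      _ ≤ |4*u^2 + Real.log (1 - 4*u^2)| + |(-(4*u^2))| := abs_add_le _ _
      _ = |4*u^2 + Real.log (1 - 4*u^2)| + |4*u^2| := by rw [abs_neg]
  rw [abs_of_nonneg (show (0:ℝ) ≤ 4*u^2 by positivity)] at h3
  linarith

lemma binEntAux_pointwise (j k : ℕ) (hj : 4 ≤ j) (h1 : j ≤ 4*k) (h2 : 4*k ≤ 3*j) :
    |((j:ℝ) * Real.log 2 - Real.log (j.choose k : ℝ))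
        - (Real.log (Real.pi * j / 2)/2 + (2*(k:ℝ)-(j:ℝ))^2/(2*(j:ℝ)))|
      ≤ 54*(j:ℝ)*((2*(k:ℝ)-(j:ℝ))/(2*(j:ℝ)))^4 + 3*((2*(k:ℝ)-(j:ℝ))/(2*(j:ℝ)))^2
        + |binEntAux_st j| + |binEntAux_st k| + |binEntAux_st (j-k)| := by
  have hkj : k ≤ j := by omega
  have hk1 : 1 ≤ k := by omega
  have hjk1 : 1 ≤ j - k := by omega
  have hj0 : (0:ℝ) < (j:ℝ) := by exact_mod_cast (by omega : 0 < j)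
  have hk0 : (0:ℝ) < (k:ℝ) := by exact_mod_cast (by omega : 0 < k)
  have hcast : ((j - k : ℕ) : ℝ) = (j:ℝ) - (k:ℝ) := by
    push_cast [Nat.cast_sub hkj]; ring
  have hjk0 : (0:ℝ) < (j:ℝ) - (k:ℝ) := by
    rw [← hcast]; exact_mod_cast (by omega : 0 < j - k)
  set u : ℝ := (2*(k:ℝ)-(j:ℝ))/(2*(j:ℝ)) with hu_def
  have h1R : (j:ℝ) ≤ 4*(k:ℝ) := by exact_mod_cast h1
  have h2R : 4*(k:ℝ) ≤ 3*(j:ℝ) := by exact_mod_cast h2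
  have hu : |u| ≤ 1/4 := by
    rw [abs_le, hu_def]
    constructor
    · rw [le_div_iff₀ (by linarith)]; linarith
    · rw [div_le_iff₀ (by linarith)]; linarith
  have hx : (k:ℝ) = (j:ℝ) * (1+2*u)/2 := by
    rw [hu_def]; field_simp; ring
  have hy : (j:ℝ) - (k:ℝ) = (j:ℝ) * (1-2*u)/2 := by
    rw [hu_def]; field_simp; ring
  have h1p : (0:ℝ) < 1+2*u := by nlinarith [abs_le.1 hu]
  have h2p : (0:ℝ) < 1-2*u := by nlinarith [abs_le.1 hu]
  -- log of binomial coefficient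
  have hCpos : (0:ℝ) < (j.choose k : ℝ) := by
    exact_mod_cast Nat.choose_pos hkj
  have hC : (j.choose k : ℝ) * ((k.factorial : ℝ) * ((j-k).factorial : ℝ)) = (j.factorial : ℝ) := by
    have := congrArg (Nat.cast : ℕ → ℝ) (Nat.choose_mul_factorial_mul_factorial hkj)
    push_cast at this
    linarith [this]
  have hfk : (0:ℝ) < (k.factorial : ℝ) := by exact_mod_cast k.factorial_pos
  have hfjk : (0:ℝ) < ((j-k).factorial : ℝ) := by exact_mod_cast (j-k).factorial_pos
  have hlogC : Real.log (j.choose k : ℝ)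
      = Real.log (j.factorial : ℝ) - Real.log (k.factorial : ℝ) - Real.log ((j-k).factorial : ℝ) := by
    rw [← hC, Real.log_mul (ne_of_gt hCpos) (by positivity), Real.log_mul (ne_of_gt hfk) (ne_of_gt hfjk)]
    ring
  have hfac : ∀ n : ℕ, Real.log (n.factorial : ℝ)
      = binEntAux_st n + ((n:ℝ)*Real.log n - n + Real.log (2*Real.pi*(n:ℝ))/2) := by
    intro n; unfold binEntAux_st; ring
  -- log decompositions
  have lk : Real.log (k:ℝ) = Real.log (j:ℝ) + Real.log (1+2*u) - Real.log 2 := by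
    rw [hx, Real.log_div (by positivity) (by norm_num), Real.log_mul (ne_of_gt hj0) (ne_of_gt h1p)]
  have ljk : Real.log ((j:ℝ)-(k:ℝ)) = Real.log (j:ℝ) + Real.log (1-2*u) - Real.log 2 := by
    rw [hy, Real.log_div (by positivity) (by norm_num), Real.log_mul (ne_of_gt hj0) (ne_of_gt h2p)]
  have l2 : ∀ x : ℝ, 0 < x → Real.log (2*Real.pi*x) = Real.log 2 + Real.log Real.pi + Real.log x := by
    intro x hxp
    rw [Real.log_mul (by positivity) (ne_of_gt hxp), Real.log_mul (by norm_num) Real.pi_ne_zero]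
  have lpij : Real.log (Real.pi*(j:ℝ)/2) = Real.log Real.pi + Real.log (j:ℝ) - Real.log 2 := by
    rw [Real.log_div (by positivity) (by norm_num), Real.log_mul Real.pi_ne_zero (ne_of_gt hj0)]
  -- key identity
  have key : ((j:ℝ) * Real.log 2 - Real.log (j.choose k : ℝ))
      - (Real.log (Real.pi * j / 2)/2 + (2*(k:ℝ)-(j:ℝ))^2/(2*(j:ℝ)))
      = (j:ℝ)*((1/2+u) * Real.log (1+2*u) + (1/2-u) * Real.log (1-2*u) - 2*u^2)
        + (Real.log (1+2*u) + Real.log (1-2*u))/2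
        - binEntAux_st j + binEntAux_st k + binEntAux_st (j-k) := by
    rw [hlogC, hfac j, hfac k, hfac (j-k), hcast, lk, ljk, l2 (j:ℝ) hj0, l2 (k:ℝ) hk0,
      l2 ((j:ℝ)-(k:ℝ)) hjk0, lk, ljk, lpij]
    rw [show (2*(k:ℝ)-(j:ℝ)) = 2*(j:ℝ)*u by rw [hu_def]; field_simp]
    rw [hx]
    field_simp
    ring
  rw [key]
  have hlog14 : Real.log (1+2*u) + Real.log (1-2*u) = Real.log (1-4*u^2) := by
    rw [← Real.log_mul (ne_of_gt h1p) (ne_of_gt h2p)]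
    congr 1; ring
  have b1 := binEntAux_phi u hu
  have b2 := binEntAux_logB u hu
  calc |(j:ℝ)*((1/2+u) * Real.log (1+2*u) + (1/2-u) * Real.log (1-2*u) - 2*u^2)
        + (Real.log (1+2*u) + Real.log (1-2*u))/2
        - binEntAux_st j + binEntAux_st k + binEntAux_st (j-k)|
      ≤ |(j:ℝ)*((1/2+u) * Real.log (1+2*u) + (1/2-u) * Real.log (1-2*u) - 2*u^2)|
        + |(Real.log (1+2*u) + Real.log (1-2*u))/2|
        + |binEntAux_st j| + |binEntAux_st k| + |binEntAux_st (j-k)| := by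
        refine (abs_add_le _ _).trans ?_
        gcongr
        refine (abs_add_le _ _).trans ?_
        gcongr
        refine (abs_sub _ _).trans ?_
        gcongr
        exact abs_add_le _ _
    _ ≤ 54*(j:ℝ)*u^4 + 3*u^2 + |binEntAux_st j| + |binEntAux_st k| + |binEntAux_st (j-k)| := by
        gcongr ?_ + ?_ + _ + _ + _
        · rw [abs_mul, abs_of_nonneg hj0.le]
          calc (j:ℝ) * |(1/2+u) * Real.log (1+2*u) + (1/2-u) * Real.log (1-2*u) - 2*u^2|
              ≤ (j:ℝ) * (54*u^4) := by gcongr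
            _ = 54*(j:ℝ)*u^4 := by ring
        · rw [hlog14, abs_div]
          calc |Real.log (1-4*u^2)|/|(2:ℝ)| ≤ (6*u^2)/2 := by
                rw [abs_two]; gcongr
            _ = 3*u^2 := by ring

/-- the binomial(j,1/2) probability mass -/
noncomputable def binEntAux_p (j k : ℕ) : ℝ := ((2:ℝ)^j)⁻¹ * (j.choose k : ℝ)

/-- the central window -/
def binEntAux_W (j : ℕ) : Finset ℕ := (range (j+1)).filter (fun k => j ≤ 4*k ∧ 4*k ≤ 3*j)
/-- the tail -/
def binEntAux_T (j : ℕ) : Finset ℕ := (range (j+1)).filter (fun k => ¬(j ≤ 4*k ∧ 4*k ≤ 3*j))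

lemma binEntAux_p_nonneg (j k : ℕ) : 0 ≤ binEntAux_p j k := by
  unfold binEntAux_p; positivity

lemma binEntAux_sum_p (j : ℕ) : ∑ k ∈ range (j+1), binEntAux_p j k = 1 := by
  unfold binEntAux_p
  rw [← Finset.mul_sum, binEntAux_m0, inv_mul_cancel₀ (by positivity)]

lemma binEntAux_sum_p_sq (j : ℕ) :
    ∑ k ∈ range (j+1), binEntAux_p j k * (2*(k:ℝ)-(j:ℝ))^2 = (j:ℝ) := by
  unfold binEntAux_p
  have : ∀ k ∈ range (j+1), ((2:ℝ)^j)⁻¹ * (j.choose k : ℝ) * (2*(k:ℝ)-(j:ℝ))^2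
      = ((2:ℝ)^j)⁻¹ * ((j.choose k : ℝ) * (2*(k:ℝ)-(j:ℝ))^2) := by intro k _; ring
  rw [Finset.sum_congr rfl this, ← Finset.mul_sum, binEntAux_m2]
  field_simp

lemma binEntAux_sum_p_q (j : ℕ) :
    ∑ k ∈ range (j+1), binEntAux_p j k * (2*(k:ℝ)-(j:ℝ))^4 = 3*(j:ℝ)^2 - 2*(j:ℝ) := by
  unfold binEntAux_p
  have : ∀ k ∈ range (j+1), ((2:ℝ)^j)⁻¹ * (j.choose k : ℝ) * (2*(k:ℝ)-(j:ℝ))^4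
      = ((2:ℝ)^j)⁻¹ * ((j.choose k : ℝ) * (2*(k:ℝ)-(j:ℝ))^4) := by intro k _; ring
  rw [Finset.sum_congr rfl this, ← Finset.mul_sum, binEntAux_m4]
  field_simp

lemma binEntAux_T_sq_ge (j k : ℕ) (hk : k ∈ binEntAux_T j) :
    (j:ℝ)^2/4 ≤ (2*(k:ℝ)-(j:ℝ))^2 := by
  rw [binEntAux_T, Finset.mem_filter] at hk
  obtain ⟨_, hk2⟩ := hk
  rcases not_and_or.1 hk2 with h | h
  · have : 4*k + 1 ≤ j := by omega
    have hR : 4*(k:ℝ) + 1 ≤ (j:ℝ) := by exact_mod_cast this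
    nlinarith
  · have : 3*j + 1 ≤ 4*k := by omega
    have hR : 3*(j:ℝ) + 1 ≤ 4*(k:ℝ) := by exact_mod_cast this
    have hj0 : (0:ℝ) ≤ (j:ℝ) := Nat.cast_nonneg j
    nlinarith

lemma binEntAux_sum_W_q (j : ℕ) :
    ∑ k ∈ binEntAux_W j, binEntAux_p j k * (2*(k:ℝ)-(j:ℝ))^4 ≤ 3*(j:ℝ)^2 := by
  have h1 : ∑ k ∈ binEntAux_W j, binEntAux_p j k * (2*(k:ℝ)-(j:ℝ))^4
      ≤ ∑ k ∈ range (j+1), binEntAux_p j k * (2*(k:ℝ)-(j:ℝ))^4 := by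
    apply Finset.sum_le_sum_of_subset_of_nonneg (Finset.filter_subset _ _)
    intro k _ _
    have := binEntAux_p_nonneg j k; positivity
  rw [binEntAux_sum_p_q] at h1
  have : (0:ℝ) ≤ (j:ℝ) := Nat.cast_nonneg j
  linarith

lemma binEntAux_sum_W_sq (j : ℕ) :
    ∑ k ∈ binEntAux_W j, binEntAux_p j k * (2*(k:ℝ)-(j:ℝ))^2 ≤ (j:ℝ) := by
  have h1 : ∑ k ∈ binEntAux_W j, binEntAux_p j k * (2*(k:ℝ)-(j:ℝ))^2
      ≤ ∑ k ∈ range (j+1), binEntAux_p j k * (2*(k:ℝ)-(j:ℝ))^2 := by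
    apply Finset.sum_le_sum_of_subset_of_nonneg (Finset.filter_subset _ _)
    intro k _ _
    have := binEntAux_p_nonneg j k; positivity
  rwa [binEntAux_sum_p_sq] at h1

lemma binEntAux_sum_W_p (j : ℕ) : ∑ k ∈ binEntAux_W j, binEntAux_p j k ≤ 1 := by
  have h1 : ∑ k ∈ binEntAux_W j, binEntAux_p j k
      ≤ ∑ k ∈ range (j+1), binEntAux_p j k :=
    Finset.sum_le_sum_of_subset_of_nonneg (Finset.filter_subset _ _)
      (fun k _ _ => binEntAux_p_nonneg j k)
  rwa [binEntAux_sum_p] at h1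

lemma binEntAux_sum_T_q (j : ℕ) :
    ∑ k ∈ binEntAux_T j, binEntAux_p j k * (2*(k:ℝ)-(j:ℝ))^4 ≤ 3*(j:ℝ)^2 := by
  have h1 : ∑ k ∈ binEntAux_T j, binEntAux_p j k * (2*(k:ℝ)-(j:ℝ))^4
      ≤ ∑ k ∈ range (j+1), binEntAux_p j k * (2*(k:ℝ)-(j:ℝ))^4 := by
    apply Finset.sum_le_sum_of_subset_of_nonneg (Finset.filter_subset _ _)
    intro k _ _
    have := binEntAux_p_nonneg j k; positivity
  rw [binEntAux_sum_p_q] at h1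
  have : (0:ℝ) ≤ (j:ℝ) := Nat.cast_nonneg j
  linarith

lemma binEntAux_sum_T_p (j : ℕ) (hj : 1 ≤ j) :
    ∑ k ∈ binEntAux_T j, binEntAux_p j k ≤ 48/(j:ℝ)^2 := by
  have hj0 : (0:ℝ) < (j:ℝ) := by exact_mod_cast hj
  have step : ∀ k ∈ binEntAux_T j, binEntAux_p j k
      ≤ (16/(j:ℝ)^4) * (binEntAux_p j k * (2*(k:ℝ)-(j:ℝ))^4) := by
    intro k hk
    have h := binEntAux_T_sq_ge j k hk
    have hp := binEntAux_p_nonneg j k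
    have h4 : (j:ℝ)^4/16 ≤ (2*(k:ℝ)-(j:ℝ))^4 := by nlinarith [sq_nonneg (2*(k:ℝ)-(j:ℝ))]
    have hpos : (0:ℝ) < 16/(j:ℝ)^4 := by positivity
    have h5 : (1:ℝ) ≤ (16/(j:ℝ)^4) * (2*(k:ℝ)-(j:ℝ))^4 := by
      have h6 := mul_le_mul_of_nonneg_left h4 hpos.le
      have h7 : (16/(j:ℝ)^4) * ((j:ℝ)^4/16) = 1 := by field_simp
      linarith
    calc binEntAux_p j k = binEntAux_p j k * 1 := (mul_one _).symm
      _ ≤ binEntAux_p j k * ((16/(j:ℝ)^4) * (2*(k:ℝ)-(j:ℝ))^4) :=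
          mul_le_mul_of_nonneg_left h5 hp
      _ = (16/(j:ℝ)^4) * (binEntAux_p j k * (2*(k:ℝ)-(j:ℝ))^4) := by ring
  calc ∑ k ∈ binEntAux_T j, binEntAux_p j k
      ≤ ∑ k ∈ binEntAux_T j, (16/(j:ℝ)^4) * (binEntAux_p j k * (2*(k:ℝ)-(j:ℝ))^4) :=
        Finset.sum_le_sum step
    _ = (16/(j:ℝ)^4) * ∑ k ∈ binEntAux_T j, binEntAux_p j k * (2*(k:ℝ)-(j:ℝ))^4 := by
        rw [Finset.mul_sum]
    _ ≤ (16/(j:ℝ)^4) * (3*(j:ℝ)^2) :=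
        mul_le_mul_of_nonneg_left (binEntAux_sum_T_q j) (by positivity)
    _ = 48/(j:ℝ)^2 := by field_simp; ring

lemma binEntAux_sum_T_sq (j : ℕ) (hj : 1 ≤ j) :
    ∑ k ∈ binEntAux_T j, binEntAux_p j k * (2*(k:ℝ)-(j:ℝ))^2 ≤ 12 := by
  have hj0 : (0:ℝ) < (j:ℝ) := by exact_mod_cast hj
  have step : ∀ k ∈ binEntAux_T j, binEntAux_p j k * (2*(k:ℝ)-(j:ℝ))^2
      ≤ (4/(j:ℝ)^2) * (binEntAux_p j k * (2*(k:ℝ)-(j:ℝ))^4) := by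
    intro k hk
    have h := binEntAux_T_sq_ge j k hk
    have hp := binEntAux_p_nonneg j k
    have h5 : (2*(k:ℝ)-(j:ℝ))^2 ≤ (4/(j:ℝ)^2) * (2*(k:ℝ)-(j:ℝ))^4 := by
      rw [show (4/(j:ℝ)^2) * (2*(k:ℝ)-(j:ℝ))^4 = 4*(2*(k:ℝ)-(j:ℝ))^4/(j:ℝ)^2 by ring,
        le_div_iff₀ (by positivity)]
      nlinarith [mul_le_mul_of_nonneg_left h (sq_nonneg (2*(k:ℝ)-(j:ℝ)))]
    calc binEntAux_p j k * (2*(k:ℝ)-(j:ℝ))^2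
        ≤ binEntAux_p j k * ((4/(j:ℝ)^2) * (2*(k:ℝ)-(j:ℝ))^4) :=
          mul_le_mul_of_nonneg_left h5 hp
      _ = (4/(j:ℝ)^2) * (binEntAux_p j k * (2*(k:ℝ)-(j:ℝ))^4) := by ring
  calc ∑ k ∈ binEntAux_T j, binEntAux_p j k * (2*(k:ℝ)-(j:ℝ))^2
      ≤ ∑ k ∈ binEntAux_T j, (4/(j:ℝ)^2) * (binEntAux_p j k * (2*(k:ℝ)-(j:ℝ))^4) :=
        Finset.sum_le_sum step
    _ = (4/(j:ℝ)^2) * ∑ k ∈ binEntAux_T j, binEntAux_p j k * (2*(k:ℝ)-(j:ℝ))^4 := by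
        rw [Finset.mul_sum]
    _ ≤ (4/(j:ℝ)^2) * (3*(j:ℝ)^2) :=
        mul_le_mul_of_nonneg_left (binEntAux_sum_T_q j) (by positivity)
    _ = 12 := by field_simp; ring

/-- surprisal -/
noncomputable def binEntAux_L (j k : ℕ) : ℝ := (j:ℝ) * Real.log 2 - Real.log (j.choose k : ℝ)

noncomputable def binEntAux_S1 (j : ℕ) : ℝ :=
  ∑ k ∈ binEntAux_W j, binEntAux_p j k *
    (binEntAux_L j k - (Real.log (Real.pi * j / 2)/2 + (2*(k:ℝ)-(j:ℝ))^2/(2*(j:ℝ))))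
noncomputable def binEntAux_S2 (j : ℕ) : ℝ :=
  (Real.log (Real.pi * j / 2)/2) * ((∑ k ∈ binEntAux_W j, binEntAux_p j k) - 1)
noncomputable def binEntAux_S3 (j : ℕ) : ℝ :=
  (∑ k ∈ binEntAux_W j, binEntAux_p j k * ((2*(k:ℝ)-(j:ℝ))^2/(2*(j:ℝ)))) - 1/2
noncomputable def binEntAux_S4 (j : ℕ) : ℝ :=
  ∑ k ∈ binEntAux_T j, binEntAux_p j k * binEntAux_L j k

lemma binEntAux_L_nonneg (j k : ℕ) (hk : k ≤ j) : 0 ≤ binEntAux_L j k := by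
  unfold binEntAux_L
  have h1 : (j.choose k : ℝ) ≤ (2:ℝ)^j := by
    have : j.choose k ≤ 2^j := by
      calc j.choose k ≤ ∑ i ∈ range (j+1), j.choose i :=
            Finset.single_le_sum (fun i _ => Nat.zero_le _) (Finset.mem_range.2 (by omega))
        _ = 2^j := Nat.sum_range_choose j
    exact_mod_cast this
  have h2 : Real.log (j.choose k : ℝ) ≤ Real.log ((2:ℝ)^j) :=
    Real.log_le_log (by exact_mod_cast Nat.choose_pos hk) h1
  rw [Real.log_pow] at h2
  linarith

lemma binEntAux_L_le (j k : ℕ) (hk : k ≤ j) : binEntAux_L j k ≤ (j:ℝ) * Real.log 2 := by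
  unfold binEntAux_L
  have h1 : (1:ℝ) ≤ (j.choose k : ℝ) := by exact_mod_cast Nat.choose_pos hk
  have := Real.log_nonneg h1
  linarith

/-- entropy as expectation of surprisal -/
lemma binEntAux_H_eq (j : ℕ) :
    (-(∑ k ∈ Finset.range (j + 1),
        ((2:ℝ) ^ j)⁻¹ * (j.choose k : ℝ) *
          Real.log (((2:ℝ) ^ j)⁻¹ * (j.choose k : ℝ))))
      = ∑ k ∈ range (j+1), binEntAux_p j k * binEntAux_L j k := by
  rw [← Finset.sum_neg_distrib]
  apply Finset.sum_congr rfl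
  intro k hk
  have hkj : k ≤ j := by have := Finset.mem_range.1 hk; omega
  have hC : (0:ℝ) < (j.choose k : ℝ) := by exact_mod_cast Nat.choose_pos hkj
  have hlog : Real.log (((2:ℝ)^j)⁻¹ * (j.choose k : ℝ))
      = -((j:ℝ) * Real.log 2) + Real.log (j.choose k : ℝ) := by
    rw [Real.log_mul (by positivity) (ne_of_gt hC), Real.log_inv, Real.log_pow]
  unfold binEntAux_p binEntAux_L
  rw [hlog]
  ring

/-- main decomposition -/
lemma binEntAux_decomp (j : ℕ) (hj : 1 ≤ j) :
    (-(∑ k ∈ Finset.range (j + 1),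
        ((2:ℝ) ^ j)⁻¹ * (j.choose k : ℝ) *
          Real.log (((2:ℝ) ^ j)⁻¹ * (j.choose k : ℝ)))) -
      (1 / 2) * Real.log (Real.pi * Real.exp 1 * (j : ℝ) / 2)
    = binEntAux_S1 j + binEntAux_S2 j + binEntAux_S3 j + binEntAux_S4 j := by
  have hj0 : (0:ℝ) < (j:ℝ) := by exact_mod_cast hj
  rw [binEntAux_H_eq]
  have hsplit : ∑ k ∈ range (j+1), binEntAux_p j k * binEntAux_L j k
      = (∑ k ∈ binEntAux_W j, binEntAux_p j k * binEntAux_L j k) + binEntAux_S4 j := by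
    rw [binEntAux_S4, binEntAux_W, binEntAux_T,
      Finset.sum_filter_add_sum_filter_not]
  rw [hsplit]
  have hW : ∑ k ∈ binEntAux_W j, binEntAux_p j k * binEntAux_L j k
      = binEntAux_S1 j + (Real.log (Real.pi * j / 2)/2) * (∑ k ∈ binEntAux_W j, binEntAux_p j k)
        + ∑ k ∈ binEntAux_W j, binEntAux_p j k * ((2*(k:ℝ)-(j:ℝ))^2/(2*(j:ℝ))) := by
    rw [binEntAux_S1, Finset.mul_sum, ← Finset.sum_add_distrib, ← Finset.sum_add_distrib]
    apply Finset.sum_congr rfl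
    intro k _
    ring
  rw [hW]
  have hlogE : Real.log (Real.pi * Real.exp 1 * (j : ℝ) / 2)
      = Real.log (Real.pi * j / 2) + 1 := by
    rw [show Real.pi * Real.exp 1 * (j:ℝ) / 2 = (Real.pi * j / 2) * Real.exp 1 by ring,
      Real.log_mul (by positivity) (by positivity), Real.log_exp]
  rw [hlogE, binEntAux_S2, binEntAux_S3]
  ring

lemma binEntAux_S2_tendsto : Tendsto binEntAux_S2 atTop (nhds 0) := by
  refine squeeze_zero_norm' ?_ (tendsto_const_div_atTop_nhds_zero_nat 48)
  · filter_upwards [eventually_ge_atTop 1] with j hj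
    have hj0 : (0:ℝ) < (j:ℝ) := by exact_mod_cast hj
    have hj1 : (1:ℝ) ≤ (j:ℝ) := by exact_mod_cast hj
    rw [binEntAux_S2, Real.norm_eq_abs, abs_mul]
    have hlpos : 0 ≤ Real.log (Real.pi * j / 2) := by
      apply Real.log_nonneg
      nlinarith [Real.pi_gt_three]
    have hlle : Real.log (Real.pi * j / 2) ≤ 2*(j:ℝ) := by
      calc Real.log (Real.pi * j / 2) ≤ Real.pi * j / 2 - 1 :=
            Real.log_le_sub_one_of_pos (by positivity)
        _ ≤ 2*(j:ℝ) := by nlinarith [Real.pi_lt_d2]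
    have habs1 : |Real.log (Real.pi * j / 2)/2| ≤ (j:ℝ) := by
      rw [abs_of_nonneg (by linarith)]; linarith
    have habs2 : |(∑ k ∈ binEntAux_W j, binEntAux_p j k) - 1| ≤ 48/(j:ℝ)^2 := by
      rw [abs_sub_comm, abs_of_nonneg (by linarith [binEntAux_sum_W_p j])]
      have : (1:ℝ) - ∑ k ∈ binEntAux_W j, binEntAux_p j k
          = ∑ k ∈ binEntAux_T j, binEntAux_p j k := by
        rw [← binEntAux_sum_p j, binEntAux_W, binEntAux_T, ← Finset.sum_filter_add_sum_filter_not
          (range (j+1)) (fun k => j ≤ 4*k ∧ 4*k ≤ 3*j) (binEntAux_p j)]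
        ring
      rw [this]
      exact binEntAux_sum_T_p j hj
    calc |Real.log (Real.pi * j / 2)/2| * |(∑ k ∈ binEntAux_W j, binEntAux_p j k) - 1|
        ≤ (j:ℝ) * (48/(j:ℝ)^2) := by
          apply mul_le_mul habs1 habs2 (abs_nonneg _) hj0.le
      _ = 48/(j:ℝ) := by field_simp

lemma binEntAux_S3_tendsto : Tendsto binEntAux_S3 atTop (nhds 0) := by
  refine squeeze_zero_norm' ?_ (tendsto_const_div_atTop_nhds_zero_nat 6)
  · filter_upwards [eventually_ge_atTop 1] with j hj
    have hj0 : (0:ℝ) < (j:ℝ) := by exact_mod_cast hj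
    have key : binEntAux_S3 j
        = -(∑ k ∈ binEntAux_T j, binEntAux_p j k * ((2*(k:ℝ)-(j:ℝ))^2/(2*(j:ℝ)))) := by
      rw [binEntAux_S3]
      have hall : (∑ k ∈ binEntAux_W j, binEntAux_p j k * ((2*(k:ℝ)-(j:ℝ))^2/(2*(j:ℝ))))
          + (∑ k ∈ binEntAux_T j, binEntAux_p j k * ((2*(k:ℝ)-(j:ℝ))^2/(2*(j:ℝ))))
          = 1/2 := by
        rw [binEntAux_W, binEntAux_T, Finset.sum_filter_add_sum_filter_not]
        have : ∀ k ∈ range (j+1), binEntAux_p j k * ((2*(k:ℝ)-(j:ℝ))^2/(2*(j:ℝ)))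
            = (binEntAux_p j k * (2*(k:ℝ)-(j:ℝ))^2) / (2*(j:ℝ)) := by intro k _; ring
        rw [Finset.sum_congr rfl this, ← Finset.sum_div, binEntAux_sum_p_sq]
        field_simp
      linarith
    rw [key, Real.norm_eq_abs, abs_neg]
    have hnn : 0 ≤ ∑ k ∈ binEntAux_T j, binEntAux_p j k * ((2*(k:ℝ)-(j:ℝ))^2/(2*(j:ℝ))) := by
      apply Finset.sum_nonneg
      intro k _
      have := binEntAux_p_nonneg j k
      positivity
    rw [abs_of_nonneg hnn]
    have : ∀ k ∈ binEntAux_T j, binEntAux_p j k * ((2*(k:ℝ)-(j:ℝ))^2/(2*(j:ℝ)))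
        = (binEntAux_p j k * (2*(k:ℝ)-(j:ℝ))^2) / (2*(j:ℝ)) := by intro k _; ring
    rw [Finset.sum_congr rfl this, ← Finset.sum_div]
    rw [div_le_div_iff₀ (by positivity) (by positivity)]
    have h12 := binEntAux_sum_T_sq j hj
    nlinarith

lemma binEntAux_S4_tendsto : Tendsto binEntAux_S4 atTop (nhds 0) := by
  refine squeeze_zero_norm' ?_ (tendsto_const_div_atTop_nhds_zero_nat (48*Real.log 2))
  · filter_upwards [eventually_ge_atTop 1] with j hj
    have hj0 : (0:ℝ) < (j:ℝ) := by exact_mod_cast hj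
    rw [Real.norm_eq_abs, binEntAux_S4]
    have hnn : 0 ≤ ∑ k ∈ binEntAux_T j, binEntAux_p j k * binEntAux_L j k := by
      apply Finset.sum_nonneg
      intro k hk
      have hkj : k ≤ j := by
        have := Finset.mem_range.1 (Finset.mem_filter.1 hk).1; omega
      exact mul_nonneg (binEntAux_p_nonneg j k) (binEntAux_L_nonneg j k hkj)
    rw [abs_of_nonneg hnn]
    calc ∑ k ∈ binEntAux_T j, binEntAux_p j k * binEntAux_L j k
        ≤ ∑ k ∈ binEntAux_T j, binEntAux_p j k * ((j:ℝ) * Real.log 2) := by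
          apply Finset.sum_le_sum
          intro k hk
          have hkj : k ≤ j := by
            have := Finset.mem_range.1 (Finset.mem_filter.1 hk).1; omega
          exact mul_le_mul_of_nonneg_left (binEntAux_L_le j k hkj) (binEntAux_p_nonneg j k)
      _ = ((j:ℝ) * Real.log 2) * ∑ k ∈ binEntAux_T j, binEntAux_p j k := by
          rw [Finset.mul_sum]; apply Finset.sum_congr rfl; intro k _; ring
      _ ≤ ((j:ℝ) * Real.log 2) * (48/(j:ℝ)^2) := by
          apply mul_le_mul_of_nonneg_left (binEntAux_sum_T_p j hj)
          positivity
      _ = (48*Real.log 2)/(j:ℝ) := by field_simp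

lemma binEntAux_S1_tendsto : Tendsto binEntAux_S1 atTop (nhds 0) := by
  rw [NormedAddCommGroup.tendsto_nhds_zero]
  intro ε hε
  obtain ⟨N', hN'⟩ := (Metric.tendsto_atTop.1 binEntAux_st_tendsto) (ε/9) (by linarith)
  have hst : ∀ n ≥ N', |binEntAux_st n| ≤ ε/9 := by
    intro n hn
    have := hN' n hn
    rw [Real.dist_eq, sub_zero] at this
    linarith
  have h12 : Tendsto (fun j : ℕ => 12/(j:ℝ)) atTop (nhds 0) :=
    tendsto_const_div_atTop_nhds_zero_nat 12
  have hev : ∀ᶠ j : ℕ in atTop, 12/(j:ℝ) < ε/2 := by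
    have := (Metric.tendsto_atTop.1 h12) (ε/2) (by linarith)
    obtain ⟨M, hM⟩ := this
    filter_upwards [eventually_ge_atTop M] with j hj
    have := hM j hj
    rw [Real.dist_eq, sub_zero] at this
    exact lt_of_abs_lt this
  filter_upwards [eventually_ge_atTop (4*N'+4), hev] with j hj hj2
  have hj4 : 4 ≤ j := by omega
  have hj0 : (0:ℝ) < (j:ℝ) := by exact_mod_cast (by omega : 0 < j)
  rw [Real.norm_eq_abs, binEntAux_S1]
  have step1 : |∑ k ∈ binEntAux_W j, binEntAux_p j k *
      (binEntAux_L j k - (Real.log (Real.pi * j / 2)/2 + (2*(k:ℝ)-(j:ℝ))^2/(2*(j:ℝ))))|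
      ≤ ∑ k ∈ binEntAux_W j, ((27/(8*(j:ℝ)^3)) * (binEntAux_p j k * (2*(k:ℝ)-(j:ℝ))^4)
          + (3/(4*(j:ℝ)^2)) * (binEntAux_p j k * (2*(k:ℝ)-(j:ℝ))^2)
          + (ε/3) * binEntAux_p j k) := by
    refine (Finset.abs_sum_le_sum_abs _ _).trans (Finset.sum_le_sum ?_)
    intro k hk
    have hmem := Finset.mem_filter.1 hk
    have hkr : k < j+1 := Finset.mem_range.1 hmem.1
    have hk1 : j ≤ 4*k := hmem.2.1
    have hk2 : 4*k ≤ 3*j := hmem.2.2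
    have hkN : N' ≤ k := by omega
    have hjkN : N' ≤ j - k := by omega
    have hjN : N' ≤ j := by omega
    have hpw := binEntAux_pointwise j k hj4 hk1 hk2
    have hpnn := binEntAux_p_nonneg j k
    rw [abs_mul, abs_of_nonneg hpnn]
    have hb : |binEntAux_L j k - (Real.log (Real.pi * j / 2)/2 + (2*(k:ℝ)-(j:ℝ))^2/(2*(j:ℝ)))|
        ≤ 54*(j:ℝ)*((2*(k:ℝ)-(j:ℝ))/(2*(j:ℝ)))^4 + 3*((2*(k:ℝ)-(j:ℝ))/(2*(j:ℝ)))^2 + ε/3 := by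
      refine hpw.trans ?_
      have e1 := hst j hjN
      have e2 := hst k hkN
      have e3 := hst (j-k) hjkN
      linarith
    calc binEntAux_p j k * |binEntAux_L j k
          - (Real.log (Real.pi * j / 2)/2 + (2*(k:ℝ)-(j:ℝ))^2/(2*(j:ℝ)))|
        ≤ binEntAux_p j k * (54*(j:ℝ)*((2*(k:ℝ)-(j:ℝ))/(2*(j:ℝ)))^4
            + 3*((2*(k:ℝ)-(j:ℝ))/(2*(j:ℝ)))^2 + ε/3) :=
          mul_le_mul_of_nonneg_left hb hpnn
      _ = (27/(8*(j:ℝ)^3)) * (binEntAux_p j k * (2*(k:ℝ)-(j:ℝ))^4)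
          + (3/(4*(j:ℝ)^2)) * (binEntAux_p j k * (2*(k:ℝ)-(j:ℝ))^2)
          + (ε/3) * binEntAux_p j k := by
          field_simp
          ring
  have step2 : ∑ k ∈ binEntAux_W j, ((27/(8*(j:ℝ)^3)) * (binEntAux_p j k * (2*(k:ℝ)-(j:ℝ))^4)
      + (3/(4*(j:ℝ)^2)) * (binEntAux_p j k * (2*(k:ℝ)-(j:ℝ))^2)
      + (ε/3) * binEntAux_p j k)
      ≤ (27/(8*(j:ℝ)^3)) * (3*(j:ℝ)^2) + (3/(4*(j:ℝ)^2)) * (j:ℝ) + (ε/3) * 1 := by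
    rw [Finset.sum_add_distrib, Finset.sum_add_distrib, ← Finset.mul_sum, ← Finset.mul_sum,
      ← Finset.mul_sum]
    have a1 := mul_le_mul_of_nonneg_left (binEntAux_sum_W_q j)
      (show (0:ℝ) ≤ 27/(8*(j:ℝ)^3) by positivity)
    have a2 := mul_le_mul_of_nonneg_left (binEntAux_sum_W_sq j)
      (show (0:ℝ) ≤ 3/(4*(j:ℝ)^2) by positivity)
    have a3 := mul_le_mul_of_nonneg_left (binEntAux_sum_W_p j)
      (show (0:ℝ) ≤ ε/3 by linarith)
    linarith
  have step3 : (27/(8*(j:ℝ)^3)) * (3*(j:ℝ)^2) + (3/(4*(j:ℝ)^2)) * (j:ℝ) + (ε/3) * 1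
      ≤ 12/(j:ℝ) + ε/3 := by
    have h1 : (27/(8*(j:ℝ)^3)) * (3*(j:ℝ)^2) = (81/8)/(j:ℝ) := by field_simp; ring
    have h2 : (3/(4*(j:ℝ)^2)) * (j:ℝ) = (3/4)/(j:ℝ) := by field_simp
    rw [h1, h2]
    have : (81/8 : ℝ)/(j:ℝ) + (3/4)/(j:ℝ) ≤ 12/(j:ℝ) := by
      rw [← add_div, div_le_div_iff₀ hj0 hj0]
      nlinarith
    linarith
  linarith [step1, step2.trans step3]

/-- The Shannon entropy of `Binomial(j, 1/2)` satisfies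
`H(j) = (1/2) ln(π e j / 2) + o(1)` as `j → ∞`. -/
theorem binomial_entropy_asymptotic :
    Tendsto (fun j : ℕ =>
      (-(∑ k ∈ Finset.range (j + 1),
          ((2:ℝ) ^ j)⁻¹ * (j.choose k : ℝ) *
            Real.log (((2:ℝ) ^ j)⁻¹ * (j.choose k : ℝ)))) -
        (1 / 2) * Real.log (Real.pi * Real.exp 1 * (j : ℝ) / 2))
      atTop (nhds 0) := by
  have hsum : Tendsto (fun j => binEntAux_S1 j + binEntAux_S2 j + binEntAux_S3 j + binEntAux_S4 j)
      atTop (nhds 0) := by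
    have := ((binEntAux_S1_tendsto.add binEntAux_S2_tendsto).add binEntAux_S3_tendsto).add
      binEntAux_S4_tendsto
    simpa using this
  apply hsum.congr'
  filter_upwards [eventually_ge_atTop 1] with j hj
  exact (binEntAux_decomp j hj).symm
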